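/- Let A = [A_{ij}] and B = [B_{ij}] be positive definite complex matrices of size nk × nk, each regarded as an n × n block matrix with k × k blocks, and let 2 ≤ μ ≤ n. Then the k × k matrix (A_μ ∘ B_μ)/(A_{μ−1} ∘ B_{μ−1}) + (A_μ/A_{μ−1}) ∘ (B_μ/B_{μ−1}) − A_{μμ} ∘ (B_μ/B_{μ−1}) − B_{μμ} ∘ (A_μ/A_{μ−1}) is positive semidefinite. -/

import Mathlib

open Matrix ComplexOrder

/-- The `μk × μk` leading principal block submatrix `A_μ` (for `μ ≤ n`) of an
`n × n` block matrix with `k × k` blocks. -/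
def leadBlock {n k : ℕ} (A : Matrix (Fin n × Fin k) (Fin n × Fin k) ℂ)
    (μ : ℕ) (h : μ ≤ n) : Matrix (Fin μ × Fin k) (Fin μ × Fin k) ℂ :=
  A.submatrix (fun p => (Fin.castLE h p.1, p.2)) (fun p => (Fin.castLE h p.1, p.2))

/-- The `μ`-th (1-based) diagonal `k × k` block `A_{μμ}` of an
`n × n` block matrix with `k × k` blocks. -/
def diagBlock {n k : ℕ} (A : Matrix (Fin n × Fin k) (Fin n × Fin k) ℂ)
    (μ : ℕ) (h : μ - 1 < n) : Matrix (Fin k) (Fin k) ℂ :=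
  Matrix.of fun a b => A (⟨μ - 1, h⟩, a) (⟨μ - 1, h⟩, b)

/-- The `k × k` Schur complement `A_μ / A_{μ-1}` of the leading principal block
submatrix `A_{μ-1}` in the leading principal block submatrix `A_μ`, i.e.
`A_{μμ} − M₂₁ A_{μ-1}⁻¹ M₁₂` where `M₂₁` (resp. `M₁₂`) is the `μ`-th block row
(resp. column) of `A_μ` with its last block removed. -/
noncomputable def schurLead {n k : ℕ} (A : Matrix (Fin n × Fin k) (Fin n × Fin k) ℂ)
    (μ : ℕ) (h : μ - 1 < n) : Matrix (Fin k) (Fin k) ℂ :=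
  diagBlock A μ h -
    (Matrix.of fun a (p : Fin (μ - 1) × Fin k) =>
        A (⟨μ - 1, h⟩, a) (Fin.castLE h.le p.1, p.2)) *
      (leadBlock A (μ - 1) h.le)⁻¹ *
      (Matrix.of fun (p : Fin (μ - 1) × Fin k) b =>
        A (Fin.castLE h.le p.1, p.2) (⟨μ - 1, h⟩, b))

section SchurHadamardAux

open scoped Matrix

set_option linter.unusedSectionVars false in
private lemma triple_swap' {I J : Type*} [Fintype I] [Fintype J] (F : I → I → J → ℂ) :
    (∑ i, ∑ j, ∑ q, F i j q) = ∑ q, ∑ i, ∑ j, F i j q := by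
  have h1 : (∑ i, ∑ j, ∑ q, F i j q) = ∑ i, ∑ q, ∑ j, F i j q :=
    Finset.sum_congr rfl fun i _ => Finset.sum_comm
  rw [h1]; exact Finset.sum_comm

private lemma quad_hadamard' {I J : Type*} [Fintype I] [Fintype J]
    (A : Matrix I I ℂ) (N : Matrix J I ℂ) (x : I → ℂ) :
    star x ⬝ᵥ (A ⊙ (Nᴴ * N)) *ᵥ x
      = ∑ q, star (fun i => N q i * x i) ⬝ᵥ A *ᵥ (fun i => N q i * x i) := by
  simp only [dotProduct, mulVec, hadamard_apply, mul_apply, conjTranspose_apply,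
    Pi.star_apply, star_mul', Finset.mul_sum, Finset.sum_mul]
  rw [triple_swap' (fun i j q => star (x i) * (A i j * (star (N q i) * N q j) * x j))]
  refine Finset.sum_congr rfl fun q _ => ?_
  refine Finset.sum_congr rfl fun i _ => ?_
  refine Finset.sum_congr rfl fun j _ => ?_
  ring

private lemma hadamard_isHermitian' {I : Type*} [Fintype I] {A B : Matrix I I ℂ}
    (hA : A.IsHermitian) (hB : B.IsHermitian) : (A ⊙ B).IsHermitian := by
  ext i j
  simp only [conjTranspose_apply, hadamard_apply, star_mul']
  rw [← conjTranspose_apply, ← conjTranspose_apply, hA, hB, mul_comm]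

private lemma exists_conjTranspose_mul_self' {I : Type*} [Fintype I] [DecidableEq I]
    {B : Matrix I I ℂ} (hB : B.PosSemidef) : ∃ N : Matrix I I ℂ, B = Nᴴ * N := by
  open scoped MatrixOrder in
  obtain ⟨N, hN⟩ := CStarAlgebra.nonneg_iff_eq_star_mul_self.mp hB.nonneg
  exact ⟨N, hN⟩

private lemma hadamard_posSemidef' {I : Type*} [Fintype I] [DecidableEq I]
    {A B : Matrix I I ℂ} (hA : A.PosSemidef) (hB : B.PosSemidef) :
    (A ⊙ B).PosSemidef := by
  obtain ⟨N, rfl⟩ := exists_conjTranspose_mul_self' hB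
  refine Matrix.posSemidef_iff_dotProduct_mulVec.mpr
    ⟨hadamard_isHermitian' hA.1 (Matrix.posSemidef_conjTranspose_mul_self N).1, fun x => ?_⟩
  rw [quad_hadamard']
  exact Finset.sum_nonneg fun q _ => hA.dotProduct_mulVec_nonneg _

private lemma hadamard_posDef' {I : Type*} [Fintype I] [DecidableEq I]
    {A B : Matrix I I ℂ} (hA : A.PosDef) (hB : B.PosDef) :
    (A ⊙ B).PosDef := by
  obtain ⟨N, hN⟩ := exists_conjTranspose_mul_self' hB.posSemidef
  subst hN
  refine Matrix.posDef_iff_dotProduct_mulVec.mpr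
    ⟨hadamard_isHermitian' hA.1 (Matrix.posSemidef_conjTranspose_mul_self N).1,
    fun x hx => ?_⟩
  rw [quad_hadamard']
  obtain ⟨i, hi⟩ := Function.ne_iff.mp hx
  by_cases hall : ∀ q, (fun i => N q i * x i) = 0
  · exfalso
    have hdiag := hB.dotProduct_mulVec_pos (x := Pi.single i 1) (by intro h; simpa using congrFun h i)
    have hNi : ∀ q, N q i = 0 := fun q => by
      have := congrFun (hall q) i
      simp only [Pi.zero_apply] at this
      exact (mul_eq_zero.mp this).resolve_right hi
    have hz : star (Pi.single i 1 : I → ℂ) ⬝ᵥ (Nᴴ * N) *ᵥ (Pi.single i 1) = 0 := by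
      simp [dotProduct, mulVec, mul_apply, conjTranspose_apply, Pi.single_apply,
        Finset.mul_sum, Finset.sum_mul]
      exact Finset.sum_eq_zero fun q _ => by simp [hNi q]
    rw [hz] at hdiag
    exact lt_irrefl _ hdiag
  · push_neg at hall
    obtain ⟨q, hq⟩ := hall
    refine Finset.sum_pos' (fun r _ => hA.posSemidef.dotProduct_mulVec_nonneg _)
      ⟨q, Finset.mem_univ q, hA.dotProduct_mulVec_pos hq⟩

private lemma sum_ext_zero' {I J : Type*} [Fintype I] [Fintype J] [DecidableEq I]
    (f : J → I) (hf : Function.Injective f) (g : I → ℂ)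
    (hg : ∀ a, a ∉ Set.range f → g a = 0) : ∑ a, g a = ∑ i, g (f i) := by
  rw [← Finset.sum_image (g := f) (f := g) (fun x _ y _ h => hf h)]
  refine (Finset.sum_subset (Finset.subset_univ _) fun a _ ha => ?_).symm
  exact hg a (by simpa [Finset.mem_image] using ha)

private lemma posDef_submatrix_of_injective' {I J : Type*} [Fintype I] [Fintype J]
    [DecidableEq I] {M : Matrix I I ℂ} (hM : M.PosDef)
    (f : J → I) (hf : Function.Injective f) : (M.submatrix f f).PosDef := by
  refine Matrix.posDef_iff_dotProduct_mulVec.mpr ⟨?_, fun x hx => ?_⟩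
  · have h : (M.submatrix f f)ᴴ = Mᴴ.submatrix f f := by simp [conjTranspose_submatrix]
    rw [Matrix.IsHermitian, h, hM.1]
  · set y : I → ℂ := Function.extend f x 0 with hy
    have hyx : ∀ i, y (f i) = x i := fun i => hf.extend_apply x 0 i
    have hy0' : ∀ a, a ∉ Set.range f → y a = 0 := by
      intro a ha
      simp [hy, Function.extend_apply' _ _ _ (by simpa [Set.range] using ha)]
    have hyne : y ≠ 0 := fun h => hx (funext fun i => by rw [← hyx i, h]; rfl)
    have hquad : star x ⬝ᵥ (M.submatrix f f) *ᵥ x = star y ⬝ᵥ M *ᵥ y := by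
      simp only [dotProduct, mulVec, Pi.star_apply, submatrix_apply]
      rw [sum_ext_zero' f hf _ (fun a ha => by simp [hy0' a ha])]
      refine Finset.sum_congr rfl fun i _ => ?_
      rw [sum_ext_zero' f hf _ (fun a ha => by simp [hy0' a ha]), hyx]
      refine congrArg _ (Finset.sum_congr rfl fun j _ => ?_)
      rw [hyx]
    rw [hquad]
    exact hM.dotProduct_mulVec_pos hyne

private lemma fromBlocks_hadamard' {I m : Type*} (A A' : Matrix I I ℂ) (B B' : Matrix I m ℂ)
    (C C' : Matrix m I ℂ) (D D' : Matrix m m ℂ) :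
    (fromBlocks A B C D) ⊙ (fromBlocks A' B' C' D')
      = fromBlocks (A ⊙ A') (B ⊙ B') (C ⊙ C') (D ⊙ D') := by
  ext (i | i) (j | j) <;> rfl

private lemma hadamard_conjTranspose' {I m : Type*} (X Y : Matrix m I ℂ) :
    (X ⊙ Y)ᴴ = Xᴴ ⊙ Yᴴ := by
  ext i j; simp [conjTranspose_apply, star_mul']

private lemma schur_key' {I : Type*} [Fintype I] [DecidableEq I] {k : ℕ}
    {M N : Matrix I I ℂ} (hM : M.PosDef) (hN : N.PosDef) (X Y : Matrix (Fin k) I ℂ) :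
    ((X * M⁻¹ * Xᴴ) ⊙ (Y * N⁻¹ * Yᴴ) - (X ⊙ Y) * (M ⊙ N)⁻¹ * (X ⊙ Y)ᴴ).PosSemidef := by
  have hMN : (M ⊙ N).PosDef := hadamard_posDef' hM hN
  haveI := hM.isUnit.invertible
  haveI := hN.isUnit.invertible
  haveI := hMN.isUnit.invertible
  have h1 : (fromBlocks M Xᴴ (Xᴴ)ᴴ (X * M⁻¹ * Xᴴ)).PosSemidef := by
    rw [Matrix.PosDef.fromBlocks₁₁ Xᴴ (X * M⁻¹ * Xᴴ) hM]
    simp only [conjTranspose_conjTranspose]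
    rw [sub_self]
    exact Matrix.PosSemidef.zero
  have h2 : (fromBlocks N Yᴴ (Yᴴ)ᴴ (Y * N⁻¹ * Yᴴ)).PosSemidef := by
    rw [Matrix.PosDef.fromBlocks₁₁ Yᴴ (Y * N⁻¹ * Yᴴ) hN]
    simp only [conjTranspose_conjTranspose]
    rw [sub_self]
    exact Matrix.PosSemidef.zero
  have h3 := hadamard_posSemidef' h1 h2
  rw [fromBlocks_hadamard', ← hadamard_conjTranspose'] at h3
  simp only [conjTranspose_conjTranspose] at h3
  have h3' : (fromBlocks (M ⊙ N) (X ⊙ Y)ᴴ ((X ⊙ Y)ᴴ)ᴴ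
      ((X * M⁻¹ * Xᴴ) ⊙ (Y * N⁻¹ * Yᴴ))).PosSemidef := by
    simpa only [conjTranspose_conjTranspose] using h3
  rw [Matrix.PosDef.fromBlocks₁₁ (X ⊙ Y)ᴴ _ hMN] at h3'
  simpa only [conjTranspose_conjTranspose] using h3'

private lemma schurLead_eq' {n k : ℕ} (A : Matrix (Fin n × Fin k) (Fin n × Fin k) ℂ)
    (hA : A.IsHermitian) (μ : ℕ) (h : μ - 1 < n) :
    schurLead A μ h =
      diagBlock A μ h -
        (Matrix.of fun a (p : Fin (μ - 1) × Fin k) =>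
            A (⟨μ - 1, h⟩, a) (Fin.castLE h.le p.1, p.2)) *
          (leadBlock A (μ - 1) h.le)⁻¹ *
          (Matrix.of fun a (p : Fin (μ - 1) × Fin k) =>
            A (⟨μ - 1, h⟩, a) (Fin.castLE h.le p.1, p.2))ᴴ := by
  unfold schurLead
  have hcol : (Matrix.of fun (p : Fin (μ - 1) × Fin k) b =>
        A (Fin.castLE h.le p.1, p.2) (⟨μ - 1, h⟩, b))
      = (Matrix.of fun a (p : Fin (μ - 1) × Fin k) =>
            A (⟨μ - 1, h⟩, a) (Fin.castLE h.le p.1, p.2))ᴴ := by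
    ext p b
    rw [conjTranspose_apply, Matrix.of_apply, Matrix.of_apply]
    exact (hA.apply _ _).symm
  rw [hcol]

end SchurHadamardAux

/-- Inequality (2.6): for positive definite block matrices `A, B ∈ M_n(M_k)` and
`2 ≤ μ ≤ n`, the `k × k` matrix
`(A_μ∘B_μ)/(A_{μ-1}∘B_{μ-1}) + (A_μ/A_{μ-1})∘(B_μ/B_{μ-1})
  − A_{μμ}∘(B_μ/B_{μ-1}) − B_{μμ}∘(A_μ/A_{μ-1})` is positive semidefinite. -/

theorem schur_hadamard_combination_posSemidef {n k : ℕ}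
    (A B : Matrix (Fin n × Fin k) (Fin n × Fin k) ℂ)
    (hA : A.PosDef) (hB : B.PosDef)
    (μ : ℕ) (hμ2 : 2 ≤ μ) (hμn : μ ≤ n) :
    (schurLead (Matrix.hadamard A B) μ (by omega) +
        Matrix.hadamard (schurLead A μ (by omega)) (schurLead B μ (by omega)) -
        Matrix.hadamard (diagBlock A μ (by omega)) (schurLead B μ (by omega)) -
        Matrix.hadamard (diagBlock B μ (by omega)) (schurLead A μ (by omega))).PosSemidef := by
  have h : μ - 1 < n := by omega
  have hinj : Function.Injective
      (fun p : Fin (μ - 1) × Fin k => ((Fin.castLE h.le p.1 : Fin n), p.2)) := by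
    intro p q hpq
    simpa [Prod.ext_iff, Fin.ext_iff] using hpq
  have hMpd : (leadBlock A (μ - 1) h.le).PosDef :=
    posDef_submatrix_of_injective' hA _ hinj
  have hNpd : (leadBlock B (μ - 1) h.le).PosDef :=
    posDef_submatrix_of_injective' hB _ hinj
  rw [schurLead_eq' A hA.1 μ h, schurLead_eq' B hB.1 μ h,
    schurLead_eq' (Matrix.hadamard A B) (hadamard_isHermitian' hA.1 hB.1) μ h]
  have hdAB : diagBlock (Matrix.hadamard A B) μ h
      = Matrix.hadamard (diagBlock A μ h) (diagBlock B μ h) := rfl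
  have hMN : leadBlock (Matrix.hadamard A B) (μ - 1) h.le
      = Matrix.hadamard (leadBlock A (μ - 1) h.le) (leadBlock B (μ - 1) h.le) := rfl
  have hZ : (Matrix.of fun a (p : Fin (μ - 1) × Fin k) =>
        Matrix.hadamard A B (⟨μ - 1, h⟩, a) (Fin.castLE h.le p.1, p.2))
      = Matrix.hadamard
          (Matrix.of fun a (p : Fin (μ - 1) × Fin k) =>
            A (⟨μ - 1, h⟩, a) (Fin.castLE h.le p.1, p.2))
          (Matrix.of fun a (p : Fin (μ - 1) × Fin k) =>
            B (⟨μ - 1, h⟩, a) (Fin.castLE h.le p.1, p.2)) := rfl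
  rw [hdAB, hMN, hZ]
  have key := schur_key' hMpd hNpd
    (Matrix.of fun a (p : Fin (μ - 1) × Fin k) =>
      A (⟨μ - 1, h⟩, a) (Fin.castLE h.le p.1, p.2))
    (Matrix.of fun a (p : Fin (μ - 1) × Fin k) =>
      B (⟨μ - 1, h⟩, a) (Fin.castLE h.le p.1, p.2))
  convert key using 1
  ext i j
  simp only [Matrix.sub_apply, Matrix.add_apply, Matrix.hadamard_apply]
  ring
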